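/- Let f : [a,b] ⊆ [0,∞) → [0,∞) be continuous, 0 ≤ a < b, with f in the Godunova–Levin class Q, f(a) = f(b), and p, q > 1. Then ∫_a^b (x-a)^p (b-x)^q f(x) f(a+b-x) dx ≤ (b-a)^{p+q+1} f(a)^2 ( B(p+1,q-1) + 2 B(p,q) + B(p-1,q+1) ). -/

import Mathlib

open MeasureTheory Set

noncomputable def eulerBeta (m n : ℝ) : ℝ := ∫ t in (0:ℝ)..1, t ^ (m - 1) * (1 - t) ^ (n - 1)

lemma betaIntegrable {r s : ℝ} (hr : -1 < r) (hs : -1 < s) :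
    IntervalIntegrable (fun t : ℝ => t ^ r * (1 - t) ^ s) volume 0 1 := by
  have key : ∀ r s : ℝ, -1 < r →
      IntervalIntegrable (fun t : ℝ => t ^ r * (1 - t) ^ s) volume 0 (1/2) := by
    intro r s hr
    apply (intervalIntegral.intervalIntegrable_rpow' hr).mul_continuousOn
    apply ContinuousOn.rpow_const
    · exact (continuous_const.sub continuous_id).continuousOn
    · intro x hx
      rw [uIcc_of_le (by norm_num : (0:ℝ) ≤ 1/2)] at hx
      left; intro h; nlinarith [hx.2]
  have h1 := key r s hr
  have h2 : IntervalIntegrable (fun t : ℝ => t ^ r * (1 - t) ^ s) volume (1/2) 1 := by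
    have h := ((key s r hs).comp_sub_left 1).symm
    have he : (fun x : ℝ => (1 - x) ^ s * (1 - (1 - x)) ^ r) =
        fun t : ℝ => t ^ r * (1 - t) ^ s := by
      funext x; rw [sub_sub_cancel, mul_comm]
    rw [he] at h
    norm_num at h
    exact h
  exact h1.trans h2

theorem cor_2_6 (f : ℝ → ℝ) (a b : ℝ) (ha : 0 ≤ a) (hab : a < b)
    (hf : ContinuousOn f (Icc a b)) (hnn : ∀ x ∈ Icc a b, 0 ≤ f x)
    (hQ : ∀ x ∈ Icc a b, ∀ y ∈ Icc a b, ∀ lam : ℝ, 0 < lam → lam < 1 →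
      f (lam * x + (1 - lam) * y) ≤ f x / lam + f y / (1 - lam))
    (hfab : f a = f b)
    (p q : ℝ) (hp : 1 < p) (hq : 1 < q) :
    ∫ x in a..b, (x - a) ^ p * (b - x) ^ q * (f x * f (a + b - x)) ≤
      (b - a) ^ (p + q + 1) * f a ^ 2 *
        (eulerBeta (p + 1) (q - 1) + 2 * eulerBeta p q + eulerBeta (p - 1) (q + 1)) := by
  have hc : (0:ℝ) < b - a := sub_pos.2 hab
  have hfa : 0 ≤ f a := hnn a ⟨le_refl a, hab.le⟩
  have hp0 : (0:ℝ) < p := by linarith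
  have hq0 : (0:ℝ) < q := by linarith
  set F := fun x : ℝ => (x - a) ^ p * (b - x) ^ q * (f x * f (a + b - x)) with hF
  set H := fun t : ℝ => (b-a)^p * (b-a)^q * f a ^ 2 *
      (t^p * (1-t)^(q-2) + 2 * (t^(p-1) * (1-t)^(q-1)) + t^(p-2) * (1-t)^q) with hH
  have hsub := intervalIntegral.smul_integral_comp_mul_add (a := 0) (b := 1) F (b - a) a
  rw [show (b-a)*0 + a = a from by ring, show (b-a)*1 + a = b from by ring] at hsub
  rw [← hsub, smul_eq_mul]
  -- integrability of the composed integrand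
  have hmaps : ∀ t ∈ Icc (0:ℝ) 1, (b - a) * t + a ∈ Icc a b := by
    intro t ht
    constructor
    · nlinarith [ht.1]
    · nlinarith [ht.2]
  have haff : Continuous (fun t : ℝ => (b - a) * t + a) := by continuity
  have hGcont : ContinuousOn (fun t => F ((b - a) * t + a)) (Icc (0:ℝ) 1) := by
    simp only [hF]
    apply ContinuousOn.mul
    apply ContinuousOn.mul
    · apply ContinuousOn.rpow_const
      · exact ((haff.sub continuous_const).continuousOn)
      · intro x _; right; exact hp0.le
    · apply ContinuousOn.rpow_const
      · exact ((continuous_const.sub haff).continuousOn)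
      · intro x _; right; exact hq0.le
    · apply ContinuousOn.mul
      · exact hf.comp haff.continuousOn hmaps
      · apply hf.comp ((continuous_const.sub haff).continuousOn)
        intro t ht
        have := hmaps t ht
        constructor
        · have := this.2; simp only [Pi.sub_apply]; nlinarith
        · have := this.1; simp only [Pi.sub_apply]; nlinarith
  have hGint : IntervalIntegrable (fun t => F ((b - a) * t + a)) volume 0 1 := by
    apply ContinuousOn.intervalIntegrable
    rwa [uIcc_of_le (by norm_num : (0:ℝ) ≤ 1)]
  have hI1 : IntervalIntegrable (fun t : ℝ => t^p * (1-t)^(q-2)) volume 0 1 :=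
    betaIntegrable (by linarith) (by linarith)
  have hI2 : IntervalIntegrable (fun t : ℝ => t^(p-1) * (1-t)^(q-1)) volume 0 1 :=
    betaIntegrable (by linarith) (by linarith)
  have hI3 : IntervalIntegrable (fun t : ℝ => t^(p-2) * (1-t)^q) volume 0 1 :=
    betaIntegrable (by linarith) (by linarith)
  have hHint : IntervalIntegrable H volume 0 1 := by
    simp only [hH]
    exact (((hI1.add (hI2.const_mul 2)).add hI3).const_mul _)
  -- pointwise bound
  have hpt : ∀ t ∈ Icc (0:ℝ) 1, F ((b - a) * t + a) ≤ H t := by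
    intro t ht
    have hHnn : 0 ≤ H t := by
      simp only [hH]
      have h1 : (0:ℝ) ≤ t := ht.1
      have h2 : (0:ℝ) ≤ 1 - t := by linarith [ht.2]
      have := Real.rpow_nonneg h1
      have := Real.rpow_nonneg h2
      positivity
    rcases eq_or_lt_of_le ht.1 with h0 | ht0
    · subst h0
      simp only [hF]
      rw [show (b-a)*0 + a - a = (0:ℝ) from by ring, Real.zero_rpow hp0.ne']
      simpa using hHnn
    rcases eq_or_lt_of_le ht.2 with h1 | ht1
    · subst h1
      simp only [hF]
      rw [show b - ((b-a)*1 + a) = (0:ℝ) from by ring, Real.zero_rpow hq0.ne']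
      simpa using hHnn
    -- interior case
    have hs0 : (0:ℝ) < 1 - t := by linarith
    have hbmem : b ∈ Icc a b := ⟨hab.le, le_refl b⟩
    have hamem : a ∈ Icc a b := ⟨le_refl a, hab.le⟩
    have h1 := hQ b hbmem a hamem t ht0 ht1
    rw [← hfab, show t * b + (1 - t) * a = (b - a) * t + a from by ring] at h1
    have h2 := hQ b hbmem a hamem (1 - t) hs0 (by linarith)
    rw [← hfab, show (1 - t) * b + (1 - (1 - t)) * a = a + b - ((b - a) * t + a) from by ring,
      show (1 : ℝ) - (1 - t) = t from by ring] at h2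
    have hx1 : (b - a) * t + a ∈ Icc a b := hmaps t ht
    have hx2 : a + b - ((b - a) * t + a) ∈ Icc a b := by
      constructor
      · nlinarith [hx1.2]
      · nlinarith [hx1.1]
    have hfx : 0 ≤ f ((b - a) * t + a) := hnn _ hx1
    have hfy : 0 ≤ f (a + b - ((b - a) * t + a)) := hnn _ hx2
    have hprod : f ((b - a) * t + a) * f (a + b - ((b - a) * t + a)) ≤
        (f a / t + f a / (1 - t)) * (f a / (1 - t) + f a / t) := by
      apply mul_le_mul h1 h2 hfy
      positivity
    have hcoef : 0 ≤ ((b - a) * t) ^ p * ((b - a) * (1 - t)) ^ q := by positivity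
    simp only [hF]
    rw [show (b - a) * t + a - a = (b - a) * t from by ring,
        show b - ((b - a) * t + a) = (b - a) * (1 - t) from by ring]
    calc ((b-a)*t)^p * ((b-a)*(1-t))^q *
          (f ((b - a) * t + a) * f (a + b - ((b - a) * t + a)))
        ≤ ((b-a)*t)^p * ((b-a)*(1-t))^q *
          ((f a / t + f a / (1 - t)) * (f a / (1 - t) + f a / t)) :=
          mul_le_mul_of_nonneg_left hprod hcoef
      _ = H t := by
          rw [Real.mul_rpow hc.le ht0.le, Real.mul_rpow hc.le hs0.le]
          have e1 : t ^ (p-1) = t^p / t := by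
            rw [Real.rpow_sub ht0, Real.rpow_one]
          have e2 : t ^ (p-2) = t^p / (t*t) := by
            rw [show p - 2 = p - 1 - 1 from by ring, Real.rpow_sub ht0, Real.rpow_one, e1,
              div_div]
          have e3 : (1-t) ^ (q-1) = (1-t)^q / (1-t) := by
            rw [Real.rpow_sub hs0, Real.rpow_one]
          have e4 : (1-t) ^ (q-2) = (1-t)^q / ((1-t)*(1-t)) := by
            rw [show q - 2 = q - 1 - 1 from by ring, Real.rpow_sub hs0, Real.rpow_one, e3,
              div_div]
          simp only [hH, e1, e2, e3, e4]
          field_simp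
          ring
  have hmono := intervalIntegral.integral_mono_on (by norm_num : (0:ℝ) ≤ 1) hGint hHint hpt
  have hHval : ∫ t in (0:ℝ)..1, H t = (b-a)^p * (b-a)^q * f a ^ 2 *
      (eulerBeta (p + 1) (q - 1) + 2 * eulerBeta p q + eulerBeta (p - 1) (q + 1)) := by
    have eb1 : eulerBeta (p+1) (q-1) = ∫ t in (0:ℝ)..1, t^p * (1-t)^(q-2) := by
      simp only [eulerBeta, show p + 1 - 1 = p from by ring, show q - 1 - 1 = q - 2 from by ring]
    have eb2 : eulerBeta p q = ∫ t in (0:ℝ)..1, t^(p-1) * (1-t)^(q-1) := rfl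
    have eb3 : eulerBeta (p-1) (q+1) = ∫ t in (0:ℝ)..1, t^(p-2) * (1-t)^q := by
      simp only [eulerBeta, show p - 1 - 1 = p - 2 from by ring, show q + 1 - 1 = q from by ring]
    simp only [hH]
    rw [intervalIntegral.integral_const_mul, intervalIntegral.integral_add
      (hI1.add (hI2.const_mul 2)) hI3, intervalIntegral.integral_add hI1 (hI2.const_mul 2),
      intervalIntegral.integral_const_mul, eb1, eb2, eb3]
  have hpow : (b-a)^(p+q+1) = (b-a)^p * (b-a)^q * (b-a) := by
    rw [Real.rpow_add hc (p+q) 1, Real.rpow_add hc p q, Real.rpow_one]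
  calc (b - a) * ∫ t in (0:ℝ)..1, F ((b - a) * t + a)
      ≤ (b - a) * ∫ t in (0:ℝ)..1, H t := by
        exact mul_le_mul_of_nonneg_left hmono hc.le
    _ = (b - a) ^ (p + q + 1) * f a ^ 2 *
        (eulerBeta (p + 1) (q - 1) + 2 * eulerBeta p q + eulerBeta (p - 1) (q + 1)) := by
        rw [hHval, hpow]; ring
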